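/- The VC-dimension of EE_n : (Z_2^n × F_n) × (Z_2^n × F_n) → {0,1} is at least 2^n − 1. -/
import Mathlib


/-- Binary vectors of length `n` over `Z_2`. -/
abbrev V2 (n : ℕ) := Fin n → ZMod 2

/-- The Exchange Evaluation game: `EE_n(x,f,y,g) = f(y) ⊕ g(x)`. -/
def EE {n : ℕ} (x : V2 n) (f : V2 n → ZMod 2) (y : V2 n) (g : V2 n → ZMod 2) : ZMod 2 :=
  f y + g x

/-- The VC-dimension of `EE_n` (as a function of Alice's input `(x,f)`, with
columns indexed by Bob's input `(y,g) ∈ Z_2^n × F_n`) is at least `2^n − 1`: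
there is a shattered set of columns of that size. -/
theorem stmt14 (n : ℕ) :
    ∃ S : Finset (V2 n × (V2 n → ZMod 2)),
      (∀ p ∈ S, p.2 0 = 0) ∧
      2 ^ n - 1 ≤ S.card ∧
      ∀ R ⊆ S, ∃ (x : V2 n) (f : V2 n → ZMod 2), f 0 = 0 ∧
        ∀ p ∈ S, (EE x f p.1 p.2 = 1 ↔ p ∈ R) := by
  classical
  refine ⟨(Finset.univ \ {0}).image (fun y : V2 n => (y, (0 : V2 n → ZMod 2))), ?_, ?_, ?_⟩
  · intro p hp
    simp only [Finset.mem_image] at hp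
    obtain ⟨y, _, rfl⟩ := hp
    rfl
  · rw [Finset.card_image_of_injective _ (fun a b h => (Prod.mk.injEq _ _ _ _).mp h |>.1)]
    rw [Finset.card_sdiff_of_subset (by simp), Finset.card_univ, Finset.card_singleton]
    simp [Fintype.card_fun]
  · intro R hR
    refine ⟨0, fun y => if (y, (0 : V2 n → ZMod 2)) ∈ R then 1 else 0, ?_, ?_⟩
    · have : ((0 : V2 n), (0 : V2 n → ZMod 2)) ∉ R := by
        intro h
        have := hR h
        simp at this
      simpa [Prod.ext_iff] using this
    · intro p hp
      simp only [Finset.mem_image] at hp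
      obtain ⟨y, hy, rfl⟩ := hp
      simp only [EE, Pi.zero_apply, add_zero]
      by_cases h : (y, (0 : V2 n → ZMod 2)) ∈ R <;> simp [h]
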